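/- arXiv:1701.00311 — 2 statements merged into one kernel-verified Lean document; each statement's English description precedes it below -/
import Mathlib

section
/- Under independent coordinates, if f* depends only on coordinates in I* and I = I₁ ∪ I₂ with I₁ ⊂ I* and I₂ ∩ I* = ∅, then the squared L² distance from f* to functions of X_I equals the squared L² distance from f* to functions of X_{I₁} plus E[(E[f*|X_{I₁}] - E[f*|X_I])²]; in particular d²(f*, Θ_I) ≥ d²(f*, Θ_{I₁}). -/
open MeasureTheory ProbabilityTheory Set

/-- The sub-σ-algebra `σ(X_I)` of the product space generated by the coordinates in `I`. -/
def sigmaSub (p : ℕ) (I : Finset (Fin p)) : MeasurableSpace (Fin p → ℝ) :=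
  MeasurableSpace.comap (fun ω (i : {x // x ∈ I}) => ω i.1) MeasurableSpace.pi

lemma sigmaSub_le {p : ℕ} (I : Finset (Fin p)) : sigmaSub p I ≤ MeasurableSpace.pi :=
  Measurable.comap_le (measurable_pi_lambda _ fun i => measurable_pi_apply i.1)

lemma sigmaSub_mono {p : ℕ} {I J : Finset (Fin p)} (h : I ⊆ J) :
    sigmaSub p I ≤ sigmaSub p J := by
  have heq : (fun (ω : Fin p → ℝ) (i : {x // x ∈ I}) => ω i.1)
      = (fun (x : {x // x ∈ J} → ℝ) (i : {x // x ∈ I}) => x ⟨i.1, h i.2⟩)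
        ∘ (fun ω (j : {x // x ∈ J}) => ω j.1) := rfl
  rw [sigmaSub, heq, ← MeasurableSpace.comap_comp]
  exact MeasurableSpace.comap_mono
    (Measurable.comap_le (measurable_pi_lambda _ fun i => measurable_pi_apply _))

lemma pi_inter_finset {p : ℕ} (μi : Fin p → Measure ℝ) [∀ i, IsProbabilityMeasure (μi i)]
    (S : Finset (Fin p)) (sets : Fin p → Set ℝ) (hs : ∀ i ∈ S, MeasurableSet (sets i)) :
    Measure.pi μi (⋂ i ∈ S, (fun ω : Fin p → ℝ => ω i) ⁻¹' sets i) = ∏ i ∈ S, μi i (sets i) := by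
  classical
  have h1 : (⋂ i ∈ S, (fun ω : Fin p → ℝ => ω i) ⁻¹' sets i)
      = Set.pi Set.univ (fun i => if i ∈ S then sets i else Set.univ) := by
    ext ω
    simp only [Set.mem_iInter, Set.mem_preimage, Set.mem_pi, Set.mem_univ, true_implies]
    constructor
    · intro h i
      split_ifs with hi
      · exact h i hi
      · trivial
    · intro h i hi
      have := h i
      rwa [if_pos hi] at this
  rw [h1, Measure.pi_pi]
  rw [← Finset.prod_subset (Finset.subset_univ S) (fun x _ hx => by simp [hx])]
  exact Finset.prod_congr rfl fun i hi => by rw [if_pos hi]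

lemma indep_sigmaSub {p : ℕ} (μi : Fin p → Measure ℝ) [∀ i, IsProbabilityMeasure (μi i)]
    {S T : Finset (Fin p)} (hST : Disjoint S T) :
    Indep (sigmaSub p S) (sigmaSub p T) (Measure.pi μi) := by
  have hii : iIndepFun (β := fun _ : Fin p => ℝ)
      (fun i ω => ω i) (Measure.pi μi) := by
    rw [iIndepFun_iff_measure_inter_preimage_eq_mul]
    intro U sets hset
    rw [pi_inter_finset μi U sets hset]
    refine (Finset.prod_congr rfl fun i hi => ?_).symm
    have := pi_inter_finset μi {i} sets (by simpa using hset i hi)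
    simpa using this
  exact (IndepFun_iff_Indep _ _ _).mp
    (hii.indepFun_finset S T hST (fun i => measurable_pi_apply i))

/-- Under independent coordinates, if `f*` depends only on the coordinates in `I*` and
`I = I₁ ∪ I₂` with `I₁ ⊆ I*` and `I₂ ∩ I* = ∅`, then the squared L² distance from `f*`
to functions of `X_I` equals the squared L² distance from `f*` to functions of `X_{I₁}`
plus `E[(E[f*|X_{I₁}] - E[f*|X_I])²]`; in particular `d²(f*,Θ_I) ≥ d²(f*,Θ_{I₁})`.
(Here the squared distance to `Θ_I` is `E[(f* - E[f*|X_I])²]`, conditional expectation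
being the orthogonal projection onto `Θ_I`.) -/
theorem stmt_5 (p : ℕ) (μi : Fin p → Measure ℝ)
    [∀ i, IsProbabilityMeasure (μi i)]
    (f : (Fin p → ℝ) → ℝ) (hfm : Measurable f)
    (hf2 : MemLp f 2 (Measure.pi μi))
    (Istar : Finset (Fin p))
    (hdep : ∀ ω ω' : Fin p → ℝ, (∀ i ∈ Istar, ω i = ω' i) → f ω = f ω')
    (I₁ I₂ : Finset (Fin p)) (hI₁ : I₁ ⊆ Istar) (hI₂ : Disjoint I₂ Istar) :
    (∫ ω, (f ω - ((Measure.pi μi)[f|sigmaSub p (I₁ ∪ I₂)]) ω) ^ 2 ∂(Measure.pi μi)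
        = (∫ ω, (f ω - ((Measure.pi μi)[f|sigmaSub p I₁]) ω) ^ 2 ∂(Measure.pi μi))
          + ∫ ω, (((Measure.pi μi)[f|sigmaSub p I₁]) ω
              - ((Measure.pi μi)[f|sigmaSub p (I₁ ∪ I₂)]) ω) ^ 2 ∂(Measure.pi μi)) ∧
      (∫ ω, (f ω - ((Measure.pi μi)[f|sigmaSub p I₁]) ω) ^ 2 ∂(Measure.pi μi))
        ≤ ∫ ω, (f ω - ((Measure.pi μi)[f|sigmaSub p (I₁ ∪ I₂)]) ω) ^ 2 ∂(Measure.pi μi) := by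
  classical
  set ν := Measure.pi μi with hν
  have hm₁ : sigmaSub p I₁ ≤ MeasurableSpace.pi := sigmaSub_le _
  have hmU : sigmaSub p (I₁ ∪ I₂) ≤ MeasurableSpace.pi := sigmaSub_le _
  haveI : SigmaFinite (ν.trim hmU) := by
    haveI := isFiniteMeasure_trim (μ := ν) hmU
    infer_instance
  have hfint : Integrable f ν := hf2.integrable one_le_two
  -- f is measurable w.r.t. σ(X_{Istar})
  have hfIstar : Measurable[sigmaSub p Istar] f := by
    set F : ({x // x ∈ Istar} → ℝ) → ℝ :=
      fun x => f (fun i => if h : i ∈ Istar then x ⟨i, h⟩ else 0) with hF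
    have hFm : Measurable F := by
      refine hfm.comp (measurable_pi_lambda _ fun i => ?_)
      by_cases h : i ∈ Istar
      · simp only [dif_pos h]; exact measurable_pi_apply _
      · simp only [dif_neg h]; exact measurable_const
    have hfF : f = F ∘ (fun ω (i : {x // x ∈ Istar}) => ω i.1) := by
      funext ω
      exact hdep ω _ (fun i hi => by simp [hi])
    rw [hfF]
    exact hFm.comp (Measurable.of_comap_le le_rfl)
  -- the key set-integral equality on the generated σ-algebra
  have hI₁₂ : Disjoint I₁ I₂ := Finset.disjoint_left.mpr fun a ha hb =>
    (Finset.disjoint_left.mp hI₂) hb (hI₁ ha)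
  have hkey : ∀ s : Set (Fin p → ℝ), MeasurableSet[sigmaSub p (I₁ ∪ I₂)] s →
      ∫ x in s, (ν[f|sigmaSub p I₁]) x ∂ν = ∫ x in s, f x ∂ν := by
    have h_eq : sigmaSub p (I₁ ∪ I₂) = MeasurableSpace.generateFrom
        ((Set.preimage fun ω (i : {x // x ∈ I₁ ∪ I₂}) => ω i.1) ''
          (Set.pi Set.univ ''
            Set.pi Set.univ fun _ : {x // x ∈ I₁ ∪ I₂} => { A : Set ℝ | MeasurableSet A })) := by
      rw [sigmaSub, ← generateFrom_pi, MeasurableSpace.comap_generateFrom]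
    refine MeasurableSpace.induction_on_inter (m := sigmaSub p (I₁ ∪ I₂)) h_eq
      (isPiSystem_pi.comap _) (by simp) ?_ ?_ ?_
    · -- basic boxes
      rintro s ⟨t, ⟨A, hA, rfl⟩, rfl⟩
      have hAm : ∀ i, MeasurableSet (A i) := fun i => hA i (Set.mem_univ i)
      set A' : Fin p → Set ℝ := fun i =>
        if h : i ∈ I₁ ∪ I₂ then A ⟨i, h⟩ else Set.univ with hA'
      have hA'm : ∀ i, MeasurableSet (A' i) := fun i => by
        simp only [hA']
        split_ifs with h
        · exact hAm _
        · exact MeasurableSet.univ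
      set s₁ : Set (Fin p → ℝ) :=
        (fun ω (i : {x // x ∈ I₁}) => ω i.1) ⁻¹' Set.pi Set.univ (fun i => A' i.1) with hs₁def
      set s₂ : Set (Fin p → ℝ) :=
        (fun ω (i : {x // x ∈ I₂}) => ω i.1) ⁻¹' Set.pi Set.univ (fun i => A' i.1) with hs₂def
      have hsplit : (fun ω (i : {x // x ∈ I₁ ∪ I₂}) => ω i.1) ⁻¹' Set.pi Set.univ A
          = s₁ ∩ s₂ := by
        ext ω
        simp only [hs₁def, hs₂def, Set.mem_preimage, Set.mem_pi, Set.mem_univ, true_implies,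
          Set.mem_inter_iff, Subtype.forall, hA']
        constructor
        · intro h
          refine ⟨fun i hi => ?_, fun i hi => ?_⟩
          · have hm : i ∈ I₁ ∪ I₂ := Finset.mem_union_left _ hi
            rw [dif_pos hm]; exact h i hm
          · have hm : i ∈ I₁ ∪ I₂ := Finset.mem_union_right _ hi
            rw [dif_pos hm]; exact h i hm
        · rintro ⟨h1, h2⟩ i hi
          rcases Finset.mem_union.mp hi with h | h
          · have := h1 i h; rwa [dif_pos hi] at this
          · have := h2 i h; rwa [dif_pos hi] at this
      have hs₁ : MeasurableSet[sigmaSub p I₁] s₁ :=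
        ⟨_, MeasurableSet.univ_pi fun i => hA'm i.1, rfl⟩
      have hs₂ : MeasurableSet[sigmaSub p I₂] s₂ :=
        ⟨_, MeasurableSet.univ_pi fun i => hA'm i.1, rfl⟩
      have hs₁pi : MeasurableSet s₁ := sigmaSub_le I₁ _ hs₁
      have hs₂pi : MeasurableSet s₂ := sigmaSub_le I₂ _ hs₂
      have hIndep : Indep (sigmaSub p Istar) (sigmaSub p I₂) ν := indep_sigmaSub μi hI₂.symm
      have hprod : ∀ h : (Fin p → ℝ) → ℝ, Integrable h ν → Measurable[sigmaSub p Istar] h →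
          ∫ x in s₁ ∩ s₂, h x ∂ν = (∫ x in s₁, h x ∂ν) * (ν s₂).toReal := by
        intro h hint hmeas
        have hs₁' : MeasurableSet[sigmaSub p Istar] s₁ := sigmaSub_mono hI₁ _ hs₁
        have h1m : Measurable[sigmaSub p Istar] (s₁.indicator h) := hmeas.indicator hs₁'
        have h2m : Measurable[sigmaSub p I₂] (s₂.indicator (fun _ => (1:ℝ))) :=
          measurable_const.indicator hs₂
        have hIF : IndepFun (s₁.indicator h) (s₂.indicator fun _ => (1:ℝ)) ν := by
          rw [IndepFun_iff]
          rintro t1 t2 ⟨b, hb, rfl⟩ ⟨c, hc, rfl⟩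
          exact (Indep_iff _ _ _).mp hIndep _ _ (h1m hb) (h2m hc)
        have hmul := hIF.integral_mul_eq_mul_integral (hint.indicator hs₁pi).aestronglyMeasurable
          ((integrable_const (1:ℝ)).indicator hs₂pi).aestronglyMeasurable
        have hL : (fun ω => s₁.indicator h ω * s₂.indicator (fun _ => (1:ℝ)) ω)
            = (s₁ ∩ s₂).indicator h := by
          funext ω
          rw [← Set.inter_indicator_mul]
          simp
        calc ∫ x in s₁ ∩ s₂, h x ∂ν
            = ∫ x, (s₁ ∩ s₂).indicator h x ∂ν := (integral_indicator (hs₁pi.inter hs₂pi)).symm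
          _ = ∫ x, s₁.indicator h x * s₂.indicator (fun _ => (1:ℝ)) x ∂ν := by rw [← hL]
          _ = (∫ x, s₁.indicator h x ∂ν) * ∫ x, s₂.indicator (fun _ => (1:ℝ)) x ∂ν := hmul
          _ = (∫ x in s₁, h x ∂ν) * (ν s₂).toReal := by
              rw [integral_indicator hs₁pi, integral_indicator hs₂pi, setIntegral_const,
                smul_eq_mul, mul_one, measureReal_def]
      have hg1m : Measurable[sigmaSub p Istar] (ν[f|sigmaSub p I₁]) :=
        (stronglyMeasurable_condExp.mono (sigmaSub_mono hI₁)).measurable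
      rw [hsplit, hprod _ integrable_condExp hg1m, hprod f hfint hfIstar,
        setIntegral_condExp hm₁ hfint hs₁]
    · -- complement
      intro t htm hC
      have htm' : MeasurableSet t := hmU _ htm
      have h1 := integral_add_compl htm' (integrable_condExp (m := sigmaSub p I₁) (f := f) (μ := ν))
      have h2 := integral_add_compl htm' hfint
      have h3 : ∫ x, (ν[f|sigmaSub p I₁]) x ∂ν = ∫ x, f x ∂ν := integral_condExp hm₁
      linarith
    · -- disjoint unions
      intro t hdisj htm hC
      rw [integral_iUnion (fun i => hmU _ (htm i)) hdisj integrable_condExp.integrableOn,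
        integral_iUnion (fun i => hmU _ (htm i)) hdisj hfint.integrableOn]
      exact tsum_congr hC
  have hae : (ν[f|sigmaSub p I₁]) =ᵐ[ν] (ν[f|sigmaSub p (I₁ ∪ I₂)]) :=
    ae_eq_condExp_of_forall_setIntegral_eq hmU hfint
      (fun s _ _ => integrable_condExp.integrableOn)
      (fun s hs _ => hkey s hs)
      ((stronglyMeasurable_condExp.mono
        (sigmaSub_mono Finset.subset_union_left)).aestronglyMeasurable)
  have h1 : ∫ ω, (f ω - (ν[f|sigmaSub p (I₁ ∪ I₂)]) ω) ^ 2 ∂ν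
      = ∫ ω, (f ω - (ν[f|sigmaSub p I₁]) ω) ^ 2 ∂ν := by
    refine integral_congr_ae (hae.mono fun ω hω => ?_)
    simp only [hω]
  have h2 : ∫ ω, ((ν[f|sigmaSub p I₁]) ω - (ν[f|sigmaSub p (I₁ ∪ I₂)]) ω) ^ 2 ∂ν = 0 := by
    have hz : (fun ω => ((ν[f|sigmaSub p I₁]) ω - (ν[f|sigmaSub p (I₁ ∪ I₂)]) ω) ^ 2)
        =ᵐ[ν] fun _ => (0 : ℝ) := hae.mono fun ω hω => by simp [hω]
    rw [integral_congr_ae hz, integral_zero]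
  exact ⟨by rw [h1, h2, add_zero], le_of_eq h1.symm⟩
end

section
/- Let r_n(θ) = −log(p_θ(X)/p_{θ*}(X)) be the negative log-likelihood ratio and let B = {θ : E_{θ*}[r_n(θ)] ≤ nε², Var_{θ*}[r_n(θ)] ≤ nε²}. Let ρ be a probability measure supported on B. Then with P_{θ*}-probability at least 1 − 1/((D−1)² n ε²), one has ∫ r_n(θ) ρ(dθ) ≤ D n ε², for any D > 1. -/
open MeasureTheory ProbabilityTheory

lemma sq_integral_le_aux {Ω : Type*} [MeasurableSpace Ω] (ν : Measure Ω) [IsProbabilityMeasure ν]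
    {g : Ω → ℝ} (hg : MemLp g 2 ν) : (∫ x, g x ∂ν) ^ 2 ≤ ∫ x, g x ^ 2 ∂ν := by
  have h := variance_nonneg g ν
  rw [variance_eq_sub hg] at h
  simp only [Pi.pow_apply] at h
  linarith

/-- Let `r_n(θ,x) = −log(p_θ(x)/p_{θ*}(x))` be the negative log-likelihood ratio, `P` the
law of the data (density `p_{θ*}` w.r.t. `μ`), and `B = {θ : E_{θ*}[r_n(θ)] ≤ nε²,
Var_{θ*}[r_n(θ)] ≤ nε²}`.  If `ρ` is a probability measure supported on `B`, then with
`P`-probability at least `1 − 1/((D−1)² n ε²)` one has `∫ r_n(θ) ρ(dθ) ≤ D n ε²`,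
for any `D > 1`. -/
theorem stmt_19 {𝒳 Θ : Type*} [MeasurableSpace 𝒳] [MeasurableSpace Θ]
    (μ : Measure 𝒳) [SigmaFinite μ]
    (pdens : Θ → 𝒳 → ℝ) (pstar : 𝒳 → ℝ)
    (hpm : Measurable (fun z : Θ × 𝒳 => pdens z.1 z.2)) (hpsm : Measurable pstar)
    (hps0 : ∀ x, 0 ≤ pstar x)
    (P : Measure 𝒳) [IsProbabilityMeasure P]
    (hP : P = μ.withDensity fun x => ENNReal.ofReal (pstar x))
    (ρ : Measure Θ) [IsProbabilityMeasure ρ]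
    (r : Θ → 𝒳 → ℝ) (hr : ∀ θ x, r θ x = Real.log (pstar x / pdens θ x))
    (hmem : MemLp (fun z : 𝒳 × Θ => r z.2 z.1) 2 (P.prod ρ))
    (n : ℕ) (hn : 0 < n) (ε : ℝ) (hε : 0 < ε) (D : ℝ) (hD : 1 < D)
    (hB : ∀ᵐ θ ∂ρ, (∫ x, r θ x ∂P) ≤ n * ε ^ 2 ∧ variance (r θ) P ≤ n * ε ^ 2) :
    1 - 1 / ((D - 1) ^ 2 * n * ε ^ 2)
      ≤ (P {x | ∫ θ, r θ x ∂ρ ≤ D * (n * ε ^ 2)}).toReal := by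
  set a : ℝ := n * ε ^ 2 with ha_def
  have ha : 0 < a := by positivity
  set Y : 𝒳 → ℝ := fun x => ∫ θ, r θ x ∂ρ with hY_def
  set m : Θ → ℝ := fun θ => ∫ x, r θ x ∂P with hm_def
  set f : 𝒳 × Θ → ℝ := fun z => r z.2 z.1 with hf_def
  have hfas : AEStronglyMeasurable f (P.prod ρ) := hmem.aestronglyMeasurable
  have hfi : Integrable f (P.prod ρ) := hmem.integrable one_le_two
  have hfsq : Integrable (fun z => f z ^ 2) (P.prod ρ) := hmem.integrable_sq
  -- measurability of Y
  have hYm : AEStronglyMeasurable Y P := hfas.integral_prod_right'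
  -- sections in θ
  have hsec : ∀ᵐ x ∂P, Integrable (fun θ => r θ x) ρ := hfi.prod_right_ae
  have hsecsq : ∀ᵐ x ∂P, Integrable (fun θ => r θ x ^ 2) ρ := hfsq.prod_right_ae
  have hsecas : ∀ᵐ x ∂P, AEStronglyMeasurable (fun θ => r θ x) ρ := hfas.prodMk_left
  have hsecmem : ∀ᵐ x ∂P, MemLp (fun θ => r θ x) 2 ρ := by
    filter_upwards [hsecsq, hsecas] with x h1 h2
    exact (memLp_two_iff_integrable_sq h2).2 h1
  -- Y is in L²
  have hYsq_int : Integrable (fun x => Y x ^ 2) P := by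
    refine Integrable.mono' hfsq.integral_prod_left ((hYm.mul hYm).congr ?_) ?_
    · exact Filter.Eventually.of_forall fun x => (sq (Y x)).symm
    · filter_upwards [hsecmem] with x hx
      rw [Real.norm_eq_abs, abs_of_nonneg (sq_nonneg _)]
      exact sq_integral_le_aux ρ hx
  have hY2 : MemLp Y 2 P := (memLp_two_iff_integrable_sq hYm).2 hYsq_int
  -- m is integrable, and Fubini for the first moment
  have hm_int : Integrable m ρ := hfi.integral_prod_right
  have hswap : ∫ x, Y x ∂P = ∫ θ, m θ ∂ρ :=
    integral_integral_swap (f := fun x θ => r θ x) hfi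
  have hEY : ∫ x, Y x ∂P ≤ a := by
    rw [hswap]
    calc ∫ θ, m θ ∂ρ ≤ ∫ _θ, a ∂ρ :=
          integral_mono_ae hm_int (integrable_const a) (hB.mono fun θ h => h.1)
      _ = a := by simp
  -- m is in L²
  have hsecP : ∀ᵐ θ ∂ρ, Integrable (fun x => r θ x) P := hfi.prod_left_ae
  have hsecPsq : ∀ᵐ θ ∂ρ, Integrable (fun x => r θ x ^ 2) P := hfsq.prod_left_ae
  have hsecPas : ∀ᵐ θ ∂ρ, AEStronglyMeasurable (fun x => r θ x) P := by
    have := hfas.prod_swap.prodMk_left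
    filter_upwards [this] with θ hθ using hθ
  have hsecPmem : ∀ᵐ θ ∂ρ, MemLp (fun x => r θ x) 2 P := by
    filter_upwards [hsecPsq, hsecPas] with θ h1 h2
    exact (memLp_two_iff_integrable_sq h2).2 h1
  have hmsq_int : Integrable (fun θ => m θ ^ 2) ρ := by
    refine Integrable.mono' hfsq.integral_prod_right ((hm_int.1.mul hm_int.1).congr ?_) ?_
    · exact Filter.Eventually.of_forall fun θ => (sq (m θ)).symm
    · filter_upwards [hsecPmem] with θ hθ
      rw [Real.norm_eq_abs, abs_of_nonneg (sq_nonneg _)]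
      exact sq_integral_le_aux P hθ
  have hm2 : MemLp m 2 ρ := (memLp_two_iff_integrable_sq hm_int.1).2 hmsq_int
  -- the centered function on the product
  have hmp : MeasurePreserving (Prod.snd : 𝒳 × Θ → Θ) (P.prod ρ) ρ :=
    ⟨measurable_snd, by simp⟩
  have hcent : MemLp (fun z : 𝒳 × Θ => f z - m z.2) 2 (P.prod ρ) :=
    hmem.sub (hm2.comp_measurePreserving hmp)
  have hcentsq : Integrable (fun z : 𝒳 × Θ => (f z - m z.2) ^ 2) (P.prod ρ) :=
    hcent.integrable_sq
  -- variance bound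
  have hVar : variance Y P ≤ a := by
    have hvareq : variance Y P = ∫ x, (Y x - ∫ y, Y y ∂P) ^ 2 ∂P := by
      rw [variance_eq_integral hY2.1.aemeasurable]
    have hstep1 : ∫ x, (Y x - ∫ y, Y y ∂P) ^ 2 ∂P
        ≤ ∫ x, ∫ θ, (r θ x - m θ) ^ 2 ∂ρ ∂P := by
      have hYc : Integrable (fun x => (Y x - ∫ y, Y y ∂P) ^ 2) P := by
        have h0 := (hY2.sub (memLp_const (∫ y, Y y ∂P))).integrable_sq
        exact h0.congr (Filter.Eventually.of_forall fun x => by simp)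
      refine integral_mono_ae hYc hcentsq.integral_prod_left ?_
      · filter_upwards [hsec, hsecmem] with x h1 h2
        have heq : Y x - ∫ y, Y y ∂P = ∫ θ, (r θ x - m θ) ∂ρ := by
          rw [integral_sub h1 hm_int, hswap]
        rw [heq]
        exact sq_integral_le_aux ρ (h2.sub hm2)
    have hstep2 : ∫ x, ∫ θ, (r θ x - m θ) ^ 2 ∂ρ ∂P
        = ∫ θ, ∫ x, (r θ x - m θ) ^ 2 ∂P ∂ρ :=
      integral_integral_swap (f := fun x θ => (r θ x - m θ) ^ 2) hcentsq
    have hstep3 : ∫ θ, ∫ x, (r θ x - m θ) ^ 2 ∂P ∂ρ ≤ a := by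
      calc ∫ θ, ∫ x, (r θ x - m θ) ^ 2 ∂P ∂ρ ≤ ∫ _θ, a ∂ρ := by
            refine integral_mono_ae hcentsq.integral_prod_right (integrable_const a) ?_
            filter_upwards [hsecPmem, hB] with θ hθ hb
            have : ∫ x, (r θ x - m θ) ^ 2 ∂P = variance (r θ) P := by
              rw [variance_eq_integral hθ.1.aemeasurable]
            rw [this]; exact hb.2
        _ = a := by simp
    rw [hvareq]
    exact le_trans hstep1 (le_of_eq hstep2 |>.trans hstep3)
  -- Chebyshev
  set c : ℝ := (D - 1) * a with hc_def
  have hc : 0 < c := mul_pos (by linarith) ha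
  have hcheb := meas_ge_le_variance_div_sq (μ := P) hY2 hc
  set A : Set 𝒳 := {x | Y x ≤ D * a} with hA_def
  have hsub : Aᶜ ⊆ {x | c ≤ |Y x - ∫ y, Y y ∂P|} := by
    intro x hx
    simp only [hA_def, Set.mem_compl_iff, Set.mem_setOf_eq, not_le] at hx
    have : c ≤ Y x - ∫ y, Y y ∂P := by
      have := hEY
      simp only [hc_def]
      nlinarith
    simpa only [Set.mem_setOf_eq] using this.trans (le_abs_self _)
  have hcompl : P Aᶜ ≤ ENNReal.ofReal (variance Y P / c ^ 2) :=
    le_trans (measure_mono hsub) hcheb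
  have hq : variance Y P / c ^ 2 ≤ 1 / ((D - 1) ^ 2 * n * ε ^ 2) := by
    have hc2 : c ^ 2 = (D - 1) ^ 2 * a ^ 2 := by ring
    have hd1 : (0:ℝ) < (D - 1) ^ 2 := pow_pos (by linarith) 2
    rw [div_le_div_iff₀ (pow_pos hc 2) (by rw [mul_assoc]; exact mul_pos hd1 ha)]
    have hden : (D - 1) ^ 2 * ↑n * ε ^ 2 = (D - 1) ^ 2 * a := by
      rw [mul_assoc]
    rw [hden, hc2]
    nlinarith [hVar, sq_nonneg (D - 1), ha]
  -- conclude
  have hfin : P A ≠ ⊤ := measure_ne_top P A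
  have hfinc : P Aᶜ ≠ ⊤ := measure_ne_top P Aᶜ
  have hcr : (P Aᶜ).toReal ≤ 1 / ((D - 1) ^ 2 * n * ε ^ 2) := by
    calc (P Aᶜ).toReal ≤ (ENNReal.ofReal (variance Y P / c ^ 2)).toReal :=
          ENNReal.toReal_mono ENNReal.ofReal_ne_top hcompl
      _ = variance Y P / c ^ 2 := ENNReal.toReal_ofReal (div_nonneg (variance_nonneg _ _) (sq_nonneg _))
      _ ≤ _ := hq
  have hsum : 1 ≤ (P A).toReal + (P Aᶜ).toReal := by
    have h1 : (1 : ENNReal) = P Set.univ := (measure_univ).symm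
    have h2 : P Set.univ ≤ P A + P Aᶜ := by
      rw [← Set.union_compl_self A]; exact measure_union_le A Aᶜ
    have h3 : (P Set.univ).toReal ≤ (P A + P Aᶜ).toReal :=
      ENNReal.toReal_mono (ENNReal.add_ne_top.2 ⟨hfin, hfinc⟩) h2
    rw [ENNReal.toReal_add hfin hfinc] at h3
    simpa using h3
  linarith
end
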